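/- arXiv:2011.09830 — 8 statements merged into one kernel-verified Lean document; each statement's English description precedes it below -/
import Mathlib

section
/- Let φ be a continuous flow on a compact metric space and B ⊆ X a stable set. Then the complementary set B• := {x ∈ X : ω(x) ∩ B = ∅} is invariant (i.e., φ_t(B•) = B• for all t ∈ ℝ) and disjoint from B. -/
open Set Metric Topology MeasureTheory

/-- A continuous flow on `X`: jointly continuous, `φ 0 = id`, group property. -/
def IsFlow {X : Type*} [TopologicalSpace X] (φ : ℝ → X → X) : Prop :=
  Continuous (fun p : X × ℝ => φ p.2 p.1) ∧ (∀ x, φ 0 x = x) ∧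
    ∀ s t x, φ (s + t) x = φ s (φ t x)

/-- Forward invariance of a set under the flow. -/
def FwdInvariant {X : Type*} (φ : ℝ → X → X) (S : Set X) : Prop :=
  ∀ t, 0 ≤ t → ∀ x ∈ S, φ t x ∈ S

/-- The omega-limit set of a point. -/
def omegaPt {X : Type*} [TopologicalSpace X] (φ : ℝ → X → X) (x : X) : Set X :=
  ⋂ T : ℝ, closure {y | ∃ t, T ≤ t ∧ φ t x = y}

/-- The omega-limit set of a set. -/
def omegaSet {X : Type*} [TopologicalSpace X] (φ : ℝ → X → X) (U : Set X) : Set X :=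
  ⋂ T : ℝ, closure {y | ∃ t, T ≤ t ∧ ∃ u ∈ U, φ t u = y}

/-- The complementary set `B• = {x : ω(x) ∩ B = ∅}`. -/
def bulletSet {X : Type*} [TopologicalSpace X] (φ : ℝ → X → X) (B : Set X) : Set X :=
  {x | omegaPt φ x ∩ B = ∅}

/-- A closed set is stable if it has a neighborhood base of forward invariant sets. -/
def IsStable {X : Type*} [TopologicalSpace X] (φ : ℝ → X → X) (B : Set X) : Prop :=
  IsClosed B ∧ ∀ N ∈ nhdsSet B, ∃ V ∈ nhdsSet B, FwdInvariant φ V ∧ V ⊆ N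

/-- A strongly stable set, via a family of closed nested neighborhoods `U η`, `η ∈ (0,1)`,
and times `T η` bounded on compact subsets of `(0,1)`. -/
def StronglyStable {X : Type*} [MetricSpace X] (φ : ℝ → X → X) (B : Set X) : Prop :=
  IsClosed B ∧ ∃ (U : ℝ → Set X) (T : ℝ → ℝ),
    (∀ η ∈ Ioo (0:ℝ) 1, IsClosed (U η) ∧ B ⊆ interior (U η)) ∧
    (∀ η lam, η ∈ Ioo (0:ℝ) 1 → lam ∈ Ioo (0:ℝ) 1 → η < lam → U η ⊆ U lam) ∧
    (∀ η lam, η ∈ Ioo (0:ℝ) 1 → lam ∈ Ioo (0:ℝ) 1 → η < lam →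
      {x | infDist x (U η) < lam - η} ⊆ U lam) ∧
    (B = ⋂ η ∈ Ioo (0:ℝ) 1, omegaSet φ (U η)) ∧
    (∀ η ∈ Ioo (0:ℝ) 1, 0 < T η) ∧
    (∀ K, K ⊆ Ioo (0:ℝ) 1 → IsCompact K → Bornology.IsBounded (T '' K)) ∧
    ∀ η ∈ Ioo (0:ℝ) 1, closure {y | ∃ t, T η ≤ t ∧ ∃ u ∈ U η, φ t u = y} ⊆ U η

/-- A strong `(ε,T)`-chain from `x` to `y`. -/
def StrongChain {X : Type*} [MetricSpace X] (φ : ℝ → X → X) (ε T : ℝ) (x y : X) : Prop :=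
  ∃ (n : ℕ) (xs : ℕ → X) (ts : ℕ → ℝ), xs 0 = x ∧ xs (n + 1) = y ∧
    (∀ i ≤ n, T ≤ ts i) ∧
    ∑ i ∈ Finset.range (n + 1), dist (φ (ts i) (xs i)) (xs (i + 1)) < ε

/-- The strong chain recurrent set. -/
def SCR {X : Type*} [MetricSpace X] (φ : ℝ → X → X) : Set X :=
  {x | ∀ ε > 0, ∀ T > 0, StrongChain φ ε T x x}

/-- `Ω(Y,ε,T)`: points reachable from `Y` by a strong `(ε,T)`-chain. -/
def OmegaChain {X : Type*} [MetricSpace X] (φ : ℝ → X → X) (Y : Set X) (ε T : ℝ) : Set X :=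
  {y | ∃ x ∈ Y, StrongChain φ ε T x y}

/-- `Ω̄(Y,ε,T) = ⋂_{η>0} Ω(Y,ε+η,T)`. -/
def OmegaBar {X : Type*} [MetricSpace X] (φ : ℝ → X → X) (Y : Set X) (ε T : ℝ) : Set X :=
  ⋂ η ∈ Ioi (0:ℝ), OmegaChain φ Y (ε + η) T

lemma omegaPt_shift {X : Type*} [TopologicalSpace X] {φ : ℝ → X → X}
    (hφ : IsFlow φ) (s : ℝ) (x : X) : omegaPt φ (φ s x) = omegaPt φ x := by
  obtain ⟨_, _, hgrp⟩ := hφ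
  have hset : ∀ T : ℝ, {z | ∃ t, T ≤ t ∧ φ t (φ s x) = z}
      = {z | ∃ t, T + s ≤ t ∧ φ t x = z} := by
    intro T; ext z; constructor
    · rintro ⟨t, ht, rfl⟩
      exact ⟨t + s, by linarith, hgrp t s x⟩
    · rintro ⟨t, ht, rfl⟩
      refine ⟨t - s, by linarith, ?_⟩
      rw [← hgrp]; ring_nf
  ext y
  simp only [omegaPt, mem_iInter]
  constructor
  · intro h T
    have h2 := h (T - s)
    rw [hset] at h2
    have : T - s + s = T := by ring
    rwa [this] at h2
  · intro h T
    rw [hset]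
    exact h (T + s)

lemma omegaPt_nonempty {X : Type*} [TopologicalSpace X] [CompactSpace X]
    (φ : ℝ → X → X) (x : X) : (omegaPt φ x).Nonempty := by
  apply IsCompact.nonempty_iInter_of_directed_nonempty_isCompact_isClosed
  · intro T T'
    refine ⟨max T T', closure_mono ?_, closure_mono ?_⟩ <;>
      · rintro z ⟨t, ht, rfl⟩
        exact ⟨t, le_trans (by simp) ht, rfl⟩
  · intro T
    exact ⟨φ T x, subset_closure ⟨T, le_refl T, rfl⟩⟩
  · intro T; exact isClosed_closure.isCompact
  · intro T; exact isClosed_closure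

theorem stmt2 {X : Type*} [MetricSpace X] [CompactSpace X] (φ : ℝ → X → X)
    (hφ : IsFlow φ) (B : Set X) (hBne : B.Nonempty) (hB : IsStable φ B) :
    (∀ t : ℝ, φ t '' bulletSet φ B = bulletSet φ B) ∧ Disjoint B (bulletSet φ B) := by
  obtain ⟨hcont, h0, hgrp⟩ := hφ
  have hmem : ∀ t x, x ∈ bulletSet φ B ↔ φ t x ∈ bulletSet φ B := by
    intro t x
    simp only [bulletSet, mem_setOf_eq, omegaPt_shift ⟨hcont, h0, hgrp⟩ t x]
  constructor
  · intro t
    ext y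
    constructor
    · rintro ⟨x, hx, rfl⟩
      exact (hmem t x).mp hx
    · intro hy
      refine ⟨φ (-t) y, ?_, ?_⟩
      · exact (hmem (-t) y).mp hy
      · rw [← hgrp]; simp [h0]
  · rw [Set.disjoint_left]
    intro x hxB hxbul
    -- orbit of x stays near B, so ω(x) meets B's neighborhoods; contradiction
    have hω : omegaPt φ x ∩ B = ∅ := hxbul
    have hclω : IsClosed (omegaPt φ x) := isClosed_iInter fun _ => isClosed_closure
    have hdisj : Disjoint B (omegaPt φ x) := by
      rw [Set.disjoint_left]
      intro z hzB hzω
      exact absurd (mem_inter hzω hzB) (by simp [hω])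
    obtain ⟨U, V, hUopen, hVopen, hBU, hωV, hUV⟩ := normal_separation hB.1 hclω hdisj
    obtain ⟨W, hWnhds, hWinv, hWU⟩ := hB.2 U (hUopen.mem_nhdsSet.mpr hBU)
    have hxW : x ∈ W := subset_of_mem_nhdsSet hWnhds hxB
    have horb : {z | ∃ t, (0:ℝ) ≤ t ∧ φ t x = z} ⊆ U := by
      rintro z ⟨t, ht, rfl⟩
      exact hWU (hWinv t ht x hxW)
    have hωU : omegaPt φ x ⊆ closure U :=
      (iInter_subset _ 0).trans (closure_mono horb)
    obtain ⟨p, hp⟩ := omegaPt_nonempty φ x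
    have hpV : p ∈ V := hωV hp
    have hpU : p ∈ closure U := hωU hp
    have : p ∈ Vᶜ := by
      have : closure U ⊆ Vᶜ := closure_minimal
        (fun z hz => fun hzV => hUV.ne_of_mem hz hzV rfl) hVopen.isClosed_compl
      exact this hpU
    exact this hpV
end

section
/- Every strongly stable set B for a continuous flow φ on a compact metric space is forward invariant, i.e., φ_t(B) ⊆ B for all t ≥ 0. -/
open Set Metric Topology MeasureTheory

lemma fwd_omegaSet {X : Type*} [TopologicalSpace X] (φ : ℝ → X → X) (hφ : IsFlow φ)
    (U : Set X) : FwdInvariant φ (omegaSet φ U) := by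
  obtain ⟨hc, h0, hadd⟩ := hφ
  intro t ht y hy
  have hct : Continuous (φ t) :=
    hc.comp (continuous_id.prodMk continuous_const)
  simp only [omegaSet, mem_iInter] at hy ⊢
  intro T'
  have hsub : φ t '' {y | ∃ s, T' ≤ s ∧ ∃ u ∈ U, φ s u = y} ⊆
      {y | ∃ s, T' ≤ s ∧ ∃ u ∈ U, φ s u = y} := by
    rintro _ ⟨z, ⟨s, hs, u, hu, rfl⟩, rfl⟩
    exact ⟨t + s, by linarith, u, hu, hadd t s u⟩
  exact closure_mono hsub (image_closure_subset_closure_image hct ⟨y, hy T', rfl⟩)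

theorem stmt3 {X : Type*} [MetricSpace X] [CompactSpace X] (φ : ℝ → X → X)
    (hφ : IsFlow φ) (B : Set X) (hB : StronglyStable φ B) :
    FwdInvariant φ B := by
  obtain ⟨hBc, U, T, _, _, _, hEq, _, _, _⟩ := hB
  intro t ht x hx
  rw [hEq] at hx ⊢
  simp only [mem_iInter] at hx ⊢
  intro η hη
  exact fwd_omegaSet φ hφ (U η) t ht x (hx η hη)
end

section
/- Every strongly stable set B for a continuous flow φ on a compact metric space is stable, i.e., it has a neighborhood base of forward invariant sets. -/
open Set Metric Topology MeasureTheory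

theorem stmt4 {X : Type*} [MetricSpace X] [CompactSpace X] (φ : ℝ → X → X)
    (hφ : IsFlow φ) (B : Set X) (hB : StronglyStable φ B) :
    IsStable φ B := by
  obtain ⟨hBcl, U, T, hU1, hU2, -, hBeq, -, -, -⟩ := hB
  obtain ⟨hcont, hzero, hadd⟩ := hφ
  -- monotonicity of omegaSet
  have hmono : ∀ {Y Z : Set X}, Y ⊆ Z → omegaSet φ Y ⊆ omegaSet φ Z := by
    intro Y Z h
    refine iInter_mono fun T' => closure_mono ?_
    rintro y ⟨t, ht, u, hu, rfl⟩
    exact ⟨t, ht, u, h hu, rfl⟩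
  have hUmono : ∀ η lam, η ∈ Ioo (0:ℝ) 1 → lam ∈ Ioo (0:ℝ) 1 → η ≤ lam → U η ⊆ U lam := by
    intro η lam hη hlam hle
    rcases eq_or_lt_of_le hle with rfl | h
    · exact subset_rfl
    · exact hU2 _ _ hη hlam h
  -- B is forward invariant
  have hBfwd : ∀ s, 0 ≤ s → ∀ b ∈ B, φ s b ∈ B := by
    intro s _ b hb
    rw [hBeq] at hb ⊢
    simp only [mem_iInter] at hb ⊢
    intro η hη
    simp only [omegaSet, mem_iInter] at hb ⊢
    intro T'
    have hb' := hb η hη (T' - s)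
    have hc : Continuous (φ s) := hcont.comp (continuous_id.prodMk continuous_const)
    have h1 : φ s b ∈ closure (φ s '' {y | ∃ t, T' - s ≤ t ∧ ∃ u ∈ U η, φ t u = y}) :=
      image_closure_subset_closure_image hc ⟨b, hb', rfl⟩
    refine closure_mono ?_ h1
    rintro y ⟨z, ⟨t, ht, u, hu, rfl⟩, rfl⟩
    exact ⟨s + t, by linarith, u, hu, hadd s t u⟩
  refine ⟨hBcl, ?_⟩
  intro N hN
  obtain ⟨O, hOopen, hBO, hON⟩ := mem_nhdsSet_iff_exists.mp hN
  -- choose η with ω(U η) ⊆ O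
  have hex : ∃ η ∈ Ioo (0:ℝ) 1, omegaSet φ (U η) ⊆ O := by
    by_contra h
    push_neg at h
    haveI : Nonempty (Ioo (0:ℝ) 1) := ⟨⟨1/2, by norm_num⟩⟩
    set K : Ioo (0:ℝ) 1 → Set X := fun i => omegaSet φ (U i.1) \ O with hK
    have hcl : ∀ i, IsClosed (K i) := fun i =>
      (isClosed_iInter fun _ => isClosed_closure).sdiff hOopen
    have hcpt : ∀ i, IsCompact (K i) := fun i => (hcl i).isCompact
    have hne : ∀ i, (K i).Nonempty := by
      intro i
      obtain ⟨x, hx1, hx2⟩ := not_subset.mp (h i.1 i.2)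
      exact ⟨x, hx1, hx2⟩
    have hdir : Directed (· ⊇ ·) K := by
      intro i j
      have hmin : min i.1 j.1 ∈ Ioo (0:ℝ) 1 :=
        ⟨lt_min i.2.1 j.2.1, lt_of_le_of_lt (min_le_left _ _) i.2.2⟩
      refine ⟨⟨min i.1 j.1, hmin⟩, ?_, ?_⟩
      · exact diff_subset_diff_left (hmono (hUmono _ _ hmin i.2 (min_le_left _ _)))
      · exact diff_subset_diff_left (hmono (hUmono _ _ hmin j.2 (min_le_right _ _)))
    obtain ⟨x, hx⟩ :=
      IsCompact.nonempty_iInter_of_directed_nonempty_isCompact_isClosed K hdir hne hcpt hcl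
    simp only [mem_iInter] at hx
    have hxB : x ∈ B := by
      rw [hBeq]
      simp only [mem_iInter]
      exact fun η hη => (hx ⟨η, hη⟩).1
    exact (hx ⟨1/2, by norm_num⟩).2 (hBO hxB)
  obtain ⟨η, hηI, hηO⟩ := hex
  -- choose time Ts with closure (A (U η) Ts) ⊆ O
  have hexT : ∃ Ts : ℝ, 0 ≤ Ts ∧
      closure {y | ∃ t, Ts ≤ t ∧ ∃ u ∈ U η, φ t u = y} ⊆ O := by
    by_contra h
    push_neg at h
    set K : ℝ → Set X := fun T' => closure {y | ∃ t, T' ≤ t ∧ ∃ u ∈ U η, φ t u = y} \ O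
      with hK
    have hanti : ∀ {a b : ℝ}, a ≤ b → K b ⊆ K a := by
      intro a b hab
      refine diff_subset_diff_left (closure_mono ?_)
      rintro y ⟨t, ht, u, hu, rfl⟩
      exact ⟨t, le_trans hab ht, u, hu, rfl⟩
    have hcl : ∀ T', IsClosed (K T') := fun T' => isClosed_closure.sdiff hOopen
    have hcpt : ∀ T', IsCompact (K T') := fun T' => (hcl T').isCompact
    have hne : ∀ T', (K T').Nonempty := by
      intro T'
      obtain ⟨x, hx1, hx2⟩ := not_subset.mp (h (max T' 0) (le_max_right _ _))
      exact ⟨x, hanti (le_max_left _ _) ⟨hx1, hx2⟩⟩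
    have hdir : Directed (· ⊇ ·) K := fun a b =>
      ⟨max a b, hanti (le_max_left _ _), hanti (le_max_right _ _)⟩
    obtain ⟨x, hx⟩ :=
      IsCompact.nonempty_iInter_of_directed_nonempty_isCompact_isClosed K hdir hne hcpt hcl
    simp only [mem_iInter] at hx
    have hxo : x ∈ omegaSet φ (U η) := by
      simp only [omegaSet, mem_iInter]
      exact fun T' => (hx T').1
    exact (hx 0).2 (hηO hxo)
  obtain ⟨Ts, hTs0, hTsO⟩ := hexT
  -- the forward invariant neighborhood
  set V : Set X := {x | ∀ t, 0 ≤ t → φ t x ∈ O} with hV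
  refine ⟨V, ?_, ?_, ?_⟩
  · -- V ∈ 𝓝ˢ B
    rw [mem_nhdsSet_iff_forall]
    intro b hb
    have hPopen : IsOpen ((fun p : X × ℝ => φ p.2 p.1) ⁻¹' O) := hOopen.preimage hcont
    have hsub : ({b} : Set X) ×ˢ Icc 0 Ts ⊆ (fun p : X × ℝ => φ p.2 p.1) ⁻¹' O := by
      rintro ⟨x, t⟩ ⟨hx, ht⟩
      simp only [mem_singleton_iff] at hx
      subst hx
      exact hBO (hBfwd t ht.1 x hb)
    obtain ⟨u, v, huo, -, hbu, hIv, huv⟩ :=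
      generalized_tube_lemma isCompact_singleton isCompact_Icc hPopen hsub
    refine Filter.mem_of_superset
      ((huo.inter isOpen_interior).mem_nhds ⟨hbu rfl, (hU1 η hηI).2 hb⟩) ?_
    rintro x ⟨hxu, hxU⟩ t ht
    by_cases hle : t ≤ Ts
    · exact huv (mk_mem_prod hxu (hIv ⟨ht, hle⟩))
    · exact hTsO (subset_closure ⟨t, (not_le.mp hle).le, x, interior_subset hxU, rfl⟩)
  · -- forward invariance
    intro s hs x hx t ht
    have := hx (t + s) (add_nonneg ht hs)
    rwa [hadd] at this
  · -- V ⊆ N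
    intro x hx
    have := hx 0 le_rfl
    rw [hzero] at this
    exact hON this
end

section
/- Let φ be a continuous flow on a compact metric space (X,d), let B be a strongly stable set with associated family (U_η)_{η∈(0,1)}, and suppose B• := {x : ω(x) ∩ B = ∅} is nonempty. Then there exists η₀ ∈ (0,1) such that the set B*_{η₀} := {x ∈ X : φ_t(x) ∉ U_{η₀} for all t ≥ 0} is nonempty. -/
open Set Metric Topology MeasureTheory

theorem stmt5 {X : Type*} [MetricSpace X] [CompactSpace X] (φ : ℝ → X → X)
    (hφ : IsFlow φ) (B : Set X) (hBcl : IsClosed B)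
    (U : ℝ → Set X) (T : ℝ → ℝ)
    (hUcl : ∀ η ∈ Ioo (0:ℝ) 1, IsClosed (U η) ∧ B ⊆ interior (U η))
    (hUnest : ∀ η lam, η ∈ Ioo (0:ℝ) 1 → lam ∈ Ioo (0:ℝ) 1 → η < lam → U η ⊆ U lam)
    (hUi : ∀ η lam, η ∈ Ioo (0:ℝ) 1 → lam ∈ Ioo (0:ℝ) 1 → η < lam →
      {x | infDist x (U η) < lam - η} ⊆ U lam)
    (hUii : B = ⋂ η ∈ Ioo (0:ℝ) 1, omegaSet φ (U η))
    (hTpos : ∀ η ∈ Ioo (0:ℝ) 1, 0 < T η)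
    (hTbdd : ∀ K, K ⊆ Ioo (0:ℝ) 1 → IsCompact K → Bornology.IsBounded (T '' K))
    (hUiii : ∀ η ∈ Ioo (0:ℝ) 1, closure {y | ∃ t, T η ≤ t ∧ ∃ u ∈ U η, φ t u = y} ⊆ U η)
    (hbul : (bulletSet φ B).Nonempty) :
    ∃ η₀ ∈ Ioo (0:ℝ) 1, {x : X | ∀ t, 0 ≤ t → φ t x ∉ U η₀}.Nonempty := by
  obtain ⟨x, hx⟩ := hbul
  by_contra hcon
  push_neg at hcon
  -- For every η ∈ (0,1), the forward orbit of x meets U η at some nonnegative time.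
  have hmeet : ∀ η ∈ Ioo (0:ℝ) 1, ∃ t, 0 ≤ t ∧ φ t x ∈ U η := by
    intro η hη
    by_contra h2
    push_neg at h2
    have hxmem : x ∈ {x : X | ∀ t, 0 ≤ t → φ t x ∉ U η} := fun t ht => h2 t ht
    rw [hcon η hη] at hxmem
    exact hxmem
  -- Hence ω(x) ⊆ ω(U η) for every η, so ω(x) ⊆ B.
  have hsub : omegaPt φ x ⊆ B := by
    rw [hUii]
    intro y hy
    simp only [mem_iInter]
    intro η hη
    obtain ⟨t₀, ht₀, hmem⟩ := hmeet η hη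
    unfold omegaSet
    rw [mem_iInter]
    intro S
    have hy' : y ∈ closure {z | ∃ t, S + t₀ ≤ t ∧ φ t x = z} := by
      unfold omegaPt at hy
      rw [mem_iInter] at hy
      exact hy (S + t₀)
    refine closure_mono ?_ hy'
    rintro z ⟨t, ht, rfl⟩
    refine ⟨t - t₀, by linarith, φ t₀ x, hmem, ?_⟩
    rw [← hφ.2.2, sub_add_cancel]
  -- ω(x) is nonempty by compactness.
  have hne : (omegaPt φ x).Nonempty := by
    unfold omegaPt
    apply IsCompact.nonempty_iInter_of_directed_nonempty_isCompact_isClosed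
    · intro S₁ S₂
      refine ⟨max S₁ S₂, closure_mono ?_, closure_mono ?_⟩
      · rintro z ⟨t, ht, rfl⟩
        exact ⟨t, le_trans (le_max_left _ _) ht, rfl⟩
      · rintro z ⟨t, ht, rfl⟩
        exact ⟨t, le_trans (le_max_right _ _) ht, rfl⟩
    · intro S
      exact ⟨φ S x, subset_closure ⟨S, le_refl S, rfl⟩⟩
    · intro S
      exact isClosed_closure.isCompact
    · intro S
      exact isClosed_closure
  obtain ⟨y, hy⟩ := hne
  have : y ∈ omegaPt φ x ∩ B := ⟨hy, hsub hy⟩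
  rw [hx] at this
  exact this
end

section
/- With the notation of the previous lemma (B strongly stable, B• ≠ ∅, and η₀ chosen so that B*_{η₀} := {x : φ_t(x) ∉ U_{η₀} ∀ t ≥ 0} ≠ ∅), the set B*_{η₀} is forward invariant, B*_{η₀} ⊆ B•, and B ∩ cl(B*_{η₀}) = ∅. -/
open Set Metric Topology MeasureTheory

theorem stmt6 {X : Type*} [MetricSpace X] [CompactSpace X] (φ : ℝ → X → X)
    (hφ : IsFlow φ) (B : Set X) (hBcl : IsClosed B)
    (U : ℝ → Set X) (T : ℝ → ℝ)
    (hUcl : ∀ η ∈ Ioo (0:ℝ) 1, IsClosed (U η) ∧ B ⊆ interior (U η))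
    (hUnest : ∀ η lam, η ∈ Ioo (0:ℝ) 1 → lam ∈ Ioo (0:ℝ) 1 → η < lam → U η ⊆ U lam)
    (hUi : ∀ η lam, η ∈ Ioo (0:ℝ) 1 → lam ∈ Ioo (0:ℝ) 1 → η < lam →
      {x | infDist x (U η) < lam - η} ⊆ U lam)
    (hUii : B = ⋂ η ∈ Ioo (0:ℝ) 1, omegaSet φ (U η))
    (hTpos : ∀ η ∈ Ioo (0:ℝ) 1, 0 < T η)
    (hTbdd : ∀ K, K ⊆ Ioo (0:ℝ) 1 → IsCompact K → Bornology.IsBounded (T '' K))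
    (hUiii : ∀ η ∈ Ioo (0:ℝ) 1, closure {y | ∃ t, T η ≤ t ∧ ∃ u ∈ U η, φ t u = y} ⊆ U η)
    (hbul : (bulletSet φ B).Nonempty)
    (η₀ : ℝ) (hη₀ : η₀ ∈ Ioo (0:ℝ) 1)
    (Bstar : Set X) (hBstar : Bstar = {x : X | ∀ t, 0 ≤ t → φ t x ∉ U η₀})
    (hne : Bstar.Nonempty) :
    FwdInvariant φ Bstar ∧ Bstar ⊆ bulletSet φ B ∧ B ∩ closure Bstar = ∅ := by
  obtain ⟨hcont, h0, hadd⟩ := hφ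
  subst hBstar
  have hsub : {x : X | ∀ t, 0 ≤ t → φ t x ∉ U η₀} ⊆ (U η₀)ᶜ := fun x hx => by
    have := hx 0 le_rfl; rwa [h0] at this
  have hdisj : ∀ S : Set X, S ⊆ closure ((U η₀)ᶜ) → B ∩ S = ∅ := by
    intro S hS
    apply Set.eq_empty_of_forall_notMem
    rintro z ⟨hzB, hzS⟩
    have h1 : z ∈ interior (U η₀) := (hUcl η₀ hη₀).2 hzB
    have h2 : z ∈ (interior (U η₀))ᶜ := by
      rw [← closure_compl]; exact hS hzS
    exact h2 h1
  refine ⟨?_, ?_, ?_⟩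
  · intro t ht x hx s hs
    rw [← hadd]
    exact hx (s + t) (by linarith)
  · intro x hx
    have homega : omegaPt φ x ⊆ closure ((U η₀)ᶜ) := by
      intro y hy
      have := Set.mem_iInter.1 hy 0
      refine closure_mono ?_ this
      rintro z ⟨t, ht, rfl⟩
      exact hx t ht
    have := hdisj _ homega
    simpa [bulletSet, Set.inter_comm] using this
  · exact hdisj _ (closure_mono hsub)
end

section
/- Let φ be a continuous flow on a compact metric space (X,d), x ∈ X, and ε, T > 0 such that x ∉ Ω̄(x, ε, T). Then there exists a closed ball C̃ centered at x with C̃ ∩ Ω̄(C̃, ε, T) = ∅, where Ω̄(Y,ε,T) := ⋂_{η>0} Ω(Y, ε+η, T) and Ω(Y, δ, T) is the set of points reachable from some point of Y by a strong (δ,T)-chain. -/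
open Set Metric Topology MeasureTheory

lemma strongChain_mono {X : Type*} [MetricSpace X] {φ : ℝ → X → X} {δ δ' T : ℝ} {x y : X}
    (h : StrongChain φ δ T x y) (hδ : δ ≤ δ') : StrongChain φ δ' T x y := by
  obtain ⟨n, xs, ts, h0, h1, h2, h3⟩ := h
  exact ⟨n, xs, ts, h0, h1, h2, h3.trans_le hδ⟩

/-- Moving the end point of a strong chain. -/
lemma strongChain_end {X : Type*} [MetricSpace X] {φ : ℝ → X → X} {δ T : ℝ} {x b : X}
    (h : StrongChain φ δ T x b) (y : X) : StrongChain φ (δ + dist b y) T x y := by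
  obtain ⟨n, xs, ts, h0, h1, h2, h3⟩ := h
  refine ⟨n, Function.update xs (n+1) y, ts, ?_, ?_, h2, ?_⟩
  · rw [Function.update_of_ne (by omega)]; exact h0
  · simp
  · have key : ∑ i ∈ Finset.range (n + 1),
        dist (φ (ts i) (Function.update xs (n+1) y i)) (Function.update xs (n+1) y (i + 1))
        ≤ (∑ i ∈ Finset.range (n + 1), dist (φ (ts i) (xs i)) (xs (i + 1))) + dist b y := by
      rw [Finset.sum_range_succ, Finset.sum_range_succ]
      have hpre : ∀ i ∈ Finset.range n,
          dist (φ (ts i) (Function.update xs (n+1) y i)) (Function.update xs (n+1) y (i + 1))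
          = dist (φ (ts i) (xs i)) (xs (i + 1)) := by
        intro i hi
        simp only [Finset.mem_range] at hi
        rw [Function.update_of_ne (by omega), Function.update_of_ne (by omega)]
      rw [Finset.sum_congr rfl hpre]
      have : dist (φ (ts n) (Function.update xs (n+1) y n)) (Function.update xs (n+1) y (n + 1))
          ≤ dist (φ (ts n) (xs n)) (xs (n + 1)) + dist b y := by
        rw [Function.update_of_ne (by omega), Function.update_self, ← h1]
        exact dist_triangle _ _ _
      linarith
    linarith

/-- Moving the start point of a strong chain. -/
lemma strongChain_start {X : Type*} [MetricSpace X] {φ : ℝ → X → X} (hφ : IsFlow φ)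
    {δ T c : ℝ} {a y z : X} (hT : 0 < T) (h : StrongChain φ δ T a y)
    (hc : ∀ t ∈ Icc T (2*T), dist (φ t z) (φ t a) ≤ c) :
    StrongChain φ (δ + c) T z y := by
  obtain ⟨n, xs, ts, h0, h1, h2, h3⟩ := h
  by_cases hts : ts 0 ≤ 2 * T
  · -- just replace the start point
    refine ⟨n, Function.update xs 0 z, ts, by simp, ?_, h2, ?_⟩
    · rw [Function.update_of_ne (by omega)]; exact h1
    · have key : ∑ i ∈ Finset.range (n + 1),
          dist (φ (ts i) (Function.update xs 0 z i)) (Function.update xs 0 z (i + 1))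
          ≤ (∑ i ∈ Finset.range (n + 1), dist (φ (ts i) (xs i)) (xs (i + 1))) + c := by
        rw [Finset.sum_range_succ', Finset.sum_range_succ']
        have hpre : ∀ i ∈ Finset.range n,
            dist (φ (ts (i+1)) (Function.update xs 0 z (i+1))) (Function.update xs 0 z (i + 2))
            = dist (φ (ts (i+1)) (xs (i+1))) (xs (i + 2)) := by
          intro i _
          rw [Function.update_of_ne (by omega), Function.update_of_ne (by omega)]
        rw [Finset.sum_congr rfl (by intro i hi; exact hpre i hi)]
        have h00 : dist (φ (ts 0) (Function.update xs 0 z 0)) (Function.update xs 0 z 1)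
            ≤ dist (φ (ts 0) (xs 0)) (xs 1) + c := by
          rw [Function.update_self, Function.update_of_ne (by omega)]
          calc dist (φ (ts 0) z) (xs 1)
              ≤ dist (φ (ts 0) z) (φ (ts 0) (xs 0)) + dist (φ (ts 0) (xs 0)) (xs 1) :=
                dist_triangle _ _ _
            _ ≤ dist (φ (ts 0) (xs 0)) (xs 1) + c := by
                have := hc (ts 0) ⟨h2 0 (by omega), hts⟩
                rw [h0]; linarith
        linarith
      linarith
  · -- split the first step: first flow time `T`, then time `ts 0 - T`
    push_neg at hts
    set xs' : ℕ → X := fun i => if i = 0 then z else if i = 1 then φ T a else xs (i - 1) with hxs'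
    set ts' : ℕ → ℝ := fun i => if i = 0 then T else if i = 1 then ts 0 - T else ts (i - 1)
      with hts'
    refine ⟨n + 1, xs', ts', by simp [hxs'], ?_, ?_, ?_⟩
    · simp only [hxs']; rw [if_neg (by omega), if_neg (by omega)]
      simpa using h1
    · intro i hi
      simp only [hts']
      rcases Nat.eq_zero_or_pos i with h' | h'
      · simp [h']
      rcases Nat.lt_or_ge i 2 with h'' | h''
      · interval_cases i
        norm_num
        linarith
      · rw [if_neg (by omega), if_neg (by omega)]
        exact h2 (i - 1) (by omega)
    · have hsplit : ∑ i ∈ Finset.range (n + 1 + 1),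
          dist (φ (ts' i) (xs' i)) (xs' (i + 1))
          = (∑ i ∈ Finset.range (n + 1), dist (φ (ts' (i+1)) (xs' (i+1))) (xs' (i + 2)))
            + dist (φ (ts' 0) (xs' 0)) (xs' 1) := Finset.sum_range_succ' _ (n+1)
      have hterm : ∀ i ∈ Finset.range (n + 1),
          dist (φ (ts' (i+1)) (xs' (i+1))) (xs' (i + 2)) = dist (φ (ts i) (xs i)) (xs (i + 1)) := by
        intro i hi
        rcases Nat.eq_zero_or_pos i with h' | h'
        · subst h'
          simp only [hxs', hts']
          norm_num
          have heq : φ (ts 0 - T) (φ T a) = φ (ts 0) a := by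
            rw [← hφ.2.2, sub_add_cancel]
          rw [heq, h0]
        · simp only [hxs', hts']
          rw [if_neg (by omega), if_neg (by omega), if_neg (by omega), if_neg (by omega),
            if_neg (by omega), if_neg (by omega)]
          simp
      have hfirst : dist (φ (ts' 0) (xs' 0)) (xs' 1) ≤ c := by
        simp only [hxs', hts']
        norm_num
        exact hc T ⟨le_refl _, by linarith⟩
      rw [hsplit, Finset.sum_congr rfl hterm]
      linarith

theorem stmt12 {X : Type*} [MetricSpace X] [CompactSpace X] (φ : ℝ → X → X)
    (hφ : IsFlow φ) (x : X) (ε T : ℝ) (hε : 0 < ε) (hT : 0 < T)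
    (hx : x ∉ OmegaBar φ {x} ε T) :
    ∃ r > 0, closedBall x r ∩ OmegaBar φ (closedBall x r) ε T = ∅ := by
  by_contra hcon
  push_neg at hcon
  -- extract the bad η from hx
  rw [OmegaBar, mem_iInter₂] at hx
  push_neg at hx
  obtain ⟨η, hη, hxη⟩ := hx
  rw [mem_Ioi] at hη
  -- uniform continuity of the flow on X × [T, 2T]
  have hK : IsCompact ((univ : Set X) ×ˢ Icc T (2*T)) := isCompact_univ.prod isCompact_Icc
  have hUC := hK.uniformContinuousOn_of_continuous hφ.1.continuousOn
  rw [Metric.uniformContinuousOn_iff] at hUC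
  obtain ⟨δ, hδpos, hδ⟩ := hUC (η/3) (by positivity)
  have hflow : ∀ a : X, dist a x ≤ δ/2 → ∀ t ∈ Icc T (2*T), dist (φ t x) (φ t a) ≤ η/3 := by
    intro a ha t ht
    have := hδ (x, t) ⟨mem_univ _, ht⟩ (a, t) ⟨mem_univ _, ht⟩ (by
      rw [Prod.dist_eq]
      simp only [dist_self]
      rw [max_eq_left dist_nonneg]
      calc dist x a = dist a x := dist_comm _ _
        _ ≤ δ/2 := ha
        _ < δ := by linarith)
    exact this.le
  -- choose the radius
  set r : ℝ := min (δ/2) (η/3) with hr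
  have hrpos : 0 < r := lt_min (by positivity) (by positivity)
  obtain ⟨b, hb1, hb2⟩ := hcon r hrpos
  rw [OmegaBar, mem_iInter₂] at hb2
  have hb3 := hb2 (η/3) (by rw [mem_Ioi]; positivity)
  obtain ⟨a, ha, hchain⟩ := hb3
  -- build a chain from x to x
  have haδ : dist a x ≤ δ/2 := le_trans (mem_closedBall.1 ha) (min_le_left _ _)
  have hc1 : StrongChain φ (ε + η/3 + η/3) T x b :=
    strongChain_start hφ hT hchain (hflow a haδ)
  have hc2 : StrongChain φ (ε + η/3 + η/3 + dist b x) T x x := strongChain_end hc1 x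
  have hbx : dist b x ≤ η/3 := le_trans (mem_closedBall.1 hb1) (min_le_right _ _)
  have hc3 : StrongChain φ (ε + η) T x x := strongChain_mono hc2 (by linarith)
  exact hxη ⟨x, rfl, hc3⟩
end

section
/- Let φ be a continuous flow on a compact metric space X, and let (h_n)_{n≥0} be continuous Lyapunov functions for φ with values in [0,1]. Then h(x) := Σ_{n=0}^∞ h_n(x)/3ⁿ defines a continuous Lyapunov function for φ; moreover, if x ∈ X, t > 0, and h_m(φ_t(x)) < h_m(x) for some m, then h(φ_t(x)) < h(x). -/
open Set Metric Topology MeasureTheory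

theorem stmt15 {X : Type*} [MetricSpace X] [CompactSpace X] (φ : ℝ → X → X)
    (hφ : IsFlow φ) (hs : ℕ → X → ℝ)
    (hcont : ∀ n, Continuous (hs n)) (h01 : ∀ n x, hs n x ∈ Icc (0:ℝ) 1)
    (hLyap : ∀ n, ∀ t, 0 ≤ t → ∀ x, hs n (φ t x) ≤ hs n x)
    (h : X → ℝ) (hh : ∀ x, h x = ∑' n : ℕ, hs n x / 3 ^ n) :
    Continuous h ∧ (∀ t, 0 ≤ t → ∀ x, h (φ t x) ≤ h x) ∧
      ∀ x, ∀ t, 0 < t → (∃ m, hs m (φ t x) < hs m x) → h (φ t x) < h x := by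
  have hsum : ∀ x : X, Summable (fun n => hs n x / 3 ^ n) := fun x =>
    (summable_geometric_of_lt_one (by norm_num) (by norm_num : (1:ℝ)/3 < 1)).of_nonneg_of_le
      (fun n => div_nonneg (h01 n x).1 (by positivity))
      (fun n => by
        rw [div_pow, one_pow]
        exact div_le_div_of_nonneg_right (h01 n x).2 (by positivity))
  refine ⟨?_, ?_, ?_⟩
  · have : Continuous fun x => ∑' n : ℕ, hs n x / 3 ^ n := by
      apply continuous_tsum (fun n => (hcont n).div_const _)
        (summable_geometric_of_lt_one (by norm_num) (by norm_num : (1:ℝ)/3 < 1))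
      intro n x
      rw [Real.norm_eq_abs, abs_div, abs_of_nonneg (h01 n x).1, abs_of_nonneg
        (by positivity : (0:ℝ) ≤ 3 ^ n), div_pow, one_pow]
      exact div_le_div_of_nonneg_right (h01 n x).2 (by positivity) |>.trans_eq (by ring)
    exact this.congr fun x => (hh x).symm
  · intro t ht x
    rw [hh, hh]
    exact Summable.tsum_le_tsum (fun n => div_le_div_of_nonneg_right (hLyap n t ht x) (by positivity))
      (hsum _) (hsum _)
  · rintro x t ht ⟨m, hm⟩
    rw [hh, hh]
    exact Summable.tsum_lt_tsum (fun n => div_le_div_of_nonneg_right (hLyap n t ht.le x) (by positivity))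
      (div_lt_div_of_pos_right hm (by positivity)) (hsum _) (hsum _)
end

section
/- Let φ : X × ℝ → X be a continuous flow on a compact metric space (X,d). Then there exists a continuous Lyapunov function h : X → ℝ for φ which is strictly decreasing outside SCR_d(φ): for every x ∉ SCR_d(φ) and every t > 0, h(φ_t(x)) < h(x). -/
open Set Metric Topology MeasureTheory

namespace SCRaux
variable {X : Type*} [MetricSpace X] (φ : ℝ → X → X)

def costSet (T : ℝ) (x y : X) : Set ℝ :=
  {c | ∃ (n : ℕ) (xs : ℕ → X) (ts : ℕ → ℝ), xs 0 = x ∧ xs (n + 1) = y ∧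
    (∀ i ≤ n, T ≤ ts i) ∧
    ∑ i ∈ Finset.range (n + 1), dist (φ (ts i) (xs i)) (xs (i + 1)) = c}

noncomputable def cost (T : ℝ) (x y : X) : ℝ := sInf (costSet φ T x y)

variable {φ}

lemma costSet_nonneg {T : ℝ} {x y : X} {c : ℝ} (hc : c ∈ costSet φ T x y) : 0 ≤ c := by
  obtain ⟨n, xs, ts, -, -, -, hsum⟩ := hc
  exact hsum ▸ Finset.sum_nonneg fun i _ => dist_nonneg

lemma costSet_nonempty (T : ℝ) (x y : X) : (costSet φ T x y).Nonempty := by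
  refine ⟨_, 0, (fun i => if i = 0 then x else y), (fun _ => T), by simp, by simp, ?_, rfl⟩
  intro i hi; rfl

lemma costSet_bddBelow (T : ℝ) (x y : X) : BddBelow (costSet φ T x y) :=
  ⟨0, fun _ hc => costSet_nonneg hc⟩

lemma cost_nonneg (T : ℝ) (x y : X) : 0 ≤ cost φ T x y :=
  le_csInf (costSet_nonempty T x y) fun _ hc => costSet_nonneg hc

lemma cost_le_mem {T : ℝ} {x y : X} {c : ℝ} (hc : c ∈ costSet φ T x y) : cost φ T x y ≤ c :=
  csInf_le (costSet_bddBelow T x y) hc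

lemma cost_le_dist {T t : ℝ} (ht : T ≤ t) (x z : X) : cost φ T x z ≤ dist (φ t x) z := by
  refine cost_le_mem ⟨0, (fun i => if i = 0 then x else z), (fun _ => t), by simp, by simp,
    fun i _ => ht, ?_⟩
  simp

lemma cost_flow_self {T t : ℝ} (ht : T ≤ t) (x : X) : cost φ T x (φ t x) = 0 :=
  le_antisymm (by have h := cost_le_dist (φ := φ) ht x (φ t x); rwa [dist_self] at h)
    (cost_nonneg T x _)

lemma cost_le_add_dist (T : ℝ) (x y y' : X) :
    cost φ T x y' ≤ cost φ T x y + dist y y' := by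
  rw [← sub_le_iff_le_add]
  refine le_csInf (costSet_nonempty T x y) fun c hc => ?_
  rw [sub_le_iff_le_add]
  obtain ⟨n, xs, ts, h0, h1, hts, hsum⟩ := hc
  have hmem : (∑ i ∈ Finset.range n, dist (φ (ts i) (xs i)) (xs (i + 1)))
      + dist (φ (ts n) (xs n)) y' ∈ costSet φ T x y' := by
    refine ⟨n, (fun i => if i = n + 1 then y' else xs i), ts, ?_, by simp, hts, ?_⟩
    · simpa using h0
    · dsimp only
      rw [Finset.sum_range_succ]
      congr 1
      · refine Finset.sum_congr rfl fun i hi => ?_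
        rw [Finset.mem_range] at hi
        rw [if_neg (by omega : ¬ (i = n + 1)), if_neg (by omega : ¬ (i + 1 = n + 1))]
      · rw [if_neg (by omega : ¬ (n = n + 1)), if_pos rfl]
  refine le_trans (cost_le_mem hmem) ?_
  have : dist (φ (ts n) (xs n)) y' ≤ dist (φ (ts n) (xs n)) y + dist y y' := dist_triangle _ _ _
  have hs : (∑ i ∈ Finset.range n, dist (φ (ts i) (xs i)) (xs (i + 1)))
      + dist (φ (ts n) (xs n)) y = c := by
    rw [← h1, ← Finset.sum_range_succ]
    exact hsum
  linarith

lemma cost_triangle (T : ℝ) (x y z : X) :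
    cost φ T x z ≤ cost φ T x y + cost φ T y z := by
  have key : ∀ a ∈ costSet φ T x y, ∀ b ∈ costSet φ T y z, cost φ T x z ≤ a + b := by
    rintro a ⟨n1, xs1, ts1, h10, h11, h1t, h1s⟩ b ⟨n2, xs2, ts2, h20, h21, h2t, h2s⟩
    refine cost_le_mem ⟨n1 + n2 + 1,
      (fun i => if i ≤ n1 then xs1 i else xs2 (i - (n1 + 1))),
      (fun i => if i ≤ n1 then ts1 i else ts2 (i - (n1 + 1))), ?_, ?_, ?_, ?_⟩
    · simpa using h10
    · dsimp only
      rw [if_neg (by omega)]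
      have e : n1 + n2 + 1 + 1 - (n1 + 1) = n2 + 1 := by omega
      rw [e, h21]
    · intro i hi
      dsimp only
      by_cases h : i ≤ n1
      · rw [if_pos h]; exact h1t i h
      · rw [if_neg h]; exact h2t _ (by omega)
    · have hrange : n1 + n2 + 1 + 1 = (n1 + 1) + (n2 + 1) := by omega
      rw [hrange, Finset.sum_range_add]
      congr 1
      · rw [← h1s]
        refine Finset.sum_congr rfl fun i hi => ?_
        rw [Finset.mem_range] at hi
        have hi' : i ≤ n1 := by omega
        dsimp only
        by_cases h : i + 1 ≤ n1
        · simp only [if_pos hi', if_pos h]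
        · have hin : i = n1 := by omega
          subst hin
          simp only [if_pos hi', if_neg h]
          have e : i + 1 - (i + 1) = 0 := by omega
          rw [e, h20, h11]
      · rw [← h2s]
        refine Finset.sum_congr rfl fun j hj => ?_
        rw [Finset.mem_range] at hj
        dsimp only
        have hn1 : ¬ (n1 + 1 + j ≤ n1) := by omega
        have hn2 : ¬ (n1 + 1 + j + 1 ≤ n1) := by omega
        simp only [if_neg hn1, if_neg hn2]
        have e1 : n1 + 1 + j - (n1 + 1) = j := by omega
        have e2 : n1 + 1 + j + 1 - (n1 + 1) = j + 1 := by omega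
        rw [e1, e2]
  rw [← sub_le_iff_le_add]
  refine le_csInf (costSet_nonempty T x y) fun a ha => ?_
  rw [sub_le_iff_le_add, ← sub_le_iff_le_add']
  refine le_csInf (costSet_nonempty T y z) fun b hb => ?_
  rw [sub_le_iff_le_add']
  exact key a ha b hb

lemma strongChain_mono {ε ε' T T' : ℝ} {x y : X} (h : StrongChain φ ε T x y)
    (hε : ε ≤ ε') (hT : T' ≤ T) : StrongChain φ ε' T' x y := by
  obtain ⟨n, xs, ts, h0, h1, ht, hs⟩ := h
  exact ⟨n, xs, ts, h0, h1, fun i hi => le_trans hT (ht i hi), lt_of_lt_of_le hs hε⟩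

lemma le_cost_of_not_strongChain {ε T : ℝ} {x : X} (h : ¬ StrongChain φ ε T x x) :
    ε ≤ cost φ T x x := by
  by_contra hlt
  push_neg at hlt
  obtain ⟨c, hc, hcε⟩ := exists_lt_of_csInf_lt (costSet_nonempty T x x) hlt
  obtain ⟨n, xs, ts, h0, h1, hts, hsum⟩ := hc
  exact h ⟨n, xs, ts, h0, h1, hts, by rw [hsum]; exact hcε⟩

end SCRaux

namespace SCRaux
variable {X : Type*} [MetricSpace X] {φ : ℝ → X → X}

lemma cont_phi (hφ : IsFlow φ) (t : ℝ) : Continuous (fun z : X => φ t z) :=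
  hφ.1.comp (continuous_id.prodMk continuous_const)

lemma unif [CompactSpace X] (hφ : IsFlow φ) (M : ℝ) {θ : ℝ} (hθ : 0 < θ) :
    ∃ ρ > 0, ∀ a b : X, dist a b < ρ → ∀ t ∈ Icc (0:ℝ) M, dist (φ t a) (φ t b) < θ := by
  haveI : CompactSpace (Icc (0:ℝ) M) := isCompact_iff_compactSpace.mp isCompact_Icc
  have hc : Continuous (fun p : X × Icc (0:ℝ) M => φ p.2.1 p.1) :=
    hφ.1.comp (continuous_fst.prodMk (continuous_subtype_val.comp continuous_snd))
  have huc := CompactSpace.uniformContinuous_of_continuous hc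
  obtain ⟨ρ, hρ, H⟩ := Metric.uniformContinuous_iff.mp huc θ hθ
  refine ⟨ρ, hρ, fun a b hab t ht => ?_⟩
  have hd : dist ((a, ⟨t, ht⟩) : X × Icc (0:ℝ) M) (b, ⟨t, ht⟩) = dist a b := by
    rw [Prod.dist_eq, Subtype.dist_eq, dist_self]
    exact max_eq_left dist_nonneg
  exact H (show dist _ _ < ρ by rw [hd]; exact hab)

noncomputable def ufun (φ : ℝ → X → X) (T ε : ℝ) (x0 z : X) : ℝ := min (cost φ T x0 z) ε

lemma ufun_le_eps {T ε : ℝ} {x0 z : X} : ufun φ T ε x0 z ≤ ε := min_le_right _ _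

lemma ufun_nonneg {T ε : ℝ} (hε : 0 ≤ ε) (x0 z : X) : 0 ≤ ufun φ T ε x0 z :=
  le_min (cost_nonneg T x0 z) hε

lemma ufun_lip {T ε : ℝ} {x0 : X} (z z' : X) :
    ufun φ T ε x0 z ≤ ufun φ T ε x0 z' + dist z' z := by
  rcases le_total (cost φ T x0 z') ε with h | h
  · refine le_trans (min_le_left _ _) ?_
    have : ufun φ T ε x0 z' = cost φ T x0 z' := min_eq_left h
    rw [this]
    exact cost_le_add_dist T x0 z' z
  · refine le_trans (min_le_right _ _) ?_
    have : ufun φ T ε x0 z' = ε := min_eq_right h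
    rw [this]
    exact le_add_of_nonneg_right dist_nonneg

lemma ufun_flow {T ε t : ℝ} (ht : T ≤ t) (x0 z : X) :
    ufun φ T ε x0 (φ t z) ≤ ufun φ T ε x0 z := by
  refine min_le_min ?_ le_rfl
  have h1 := cost_triangle (φ := φ) T x0 z (φ t z)
  rw [cost_flow_self ht z] at h1
  simpa using h1

noncomputable def vfun (φ : ℝ → X → X) (T ε : ℝ) (x0 z : X) : ℝ :=
  sSup ((fun r => ufun φ T ε x0 (φ r z)) '' Icc 0 T)

lemma vfun_bddAbove {T ε : ℝ} {x0 z : X} :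
    BddAbove ((fun r => ufun φ T ε x0 (φ r z)) '' Icc 0 T) := by
  refine ⟨ε, ?_⟩
  rintro _ ⟨r, -, rfl⟩
  exact ufun_le_eps

lemma mem_le_vfun {T ε : ℝ} {x0 z : X} {r : ℝ} (hr : r ∈ Icc (0:ℝ) T) :
    ufun φ T ε x0 (φ r z) ≤ vfun φ T ε x0 z :=
  le_csSup vfun_bddAbove ⟨r, hr, rfl⟩

lemma vfun_le {T ε : ℝ} (hT : 0 ≤ T) {x0 z : X} {a : ℝ}
    (H : ∀ r ∈ Icc (0:ℝ) T, ufun φ T ε x0 (φ r z) ≤ a) : vfun φ T ε x0 z ≤ a := by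
  refine csSup_le ⟨_, ⟨0, ⟨le_rfl, hT⟩, rfl⟩⟩ ?_
  rintro _ ⟨r, hr, rfl⟩
  exact H r hr

lemma ufun_le_vfun (hφ : IsFlow φ) {T ε : ℝ} (hT : 0 ≤ T) (x0 z : X) :
    ufun φ T ε x0 z ≤ vfun φ T ε x0 z := by
  have := mem_le_vfun (φ := φ) (T := T) (ε := ε) (x0 := x0) (z := z) ⟨le_rfl, hT⟩
  rwa [hφ.2.1 z] at this

lemma vfun_le_eps {T ε : ℝ} (hT : 0 ≤ T) (x0 z : X) : vfun φ T ε x0 z ≤ ε :=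
  vfun_le hT fun _ _ => ufun_le_eps

lemma vfun_nonneg (hφ : IsFlow φ) {T ε : ℝ} (hT : 0 ≤ T) (hε : 0 ≤ ε) (x0 z : X) :
    0 ≤ vfun φ T ε x0 z :=
  le_trans (ufun_nonneg hε x0 z) (ufun_le_vfun hφ hT x0 z)

lemma vfun_dist_le {T ε : ℝ} (hT : 0 ≤ T) {x0 z z' : X} {c : ℝ}
    (H : ∀ r ∈ Icc (0:ℝ) T, dist (φ r z) (φ r z') ≤ c) :
    vfun φ T ε x0 z ≤ vfun φ T ε x0 z' + c := by
  refine vfun_le hT fun r hr => ?_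
  calc ufun φ T ε x0 (φ r z) ≤ ufun φ T ε x0 (φ r z') + dist (φ r z') (φ r z) := ufun_lip _ _
    _ ≤ vfun φ T ε x0 z' + c := by
        have := H r hr
        have h2 := mem_le_vfun (φ := φ) (z := z') (ε := ε) (x0 := x0) hr
        rw [dist_comm] at this
        linarith

lemma vfun_cont [CompactSpace X] (hφ : IsFlow φ) {T ε : ℝ} (hT : 0 ≤ T) (x0 : X) :
    Continuous (vfun φ T ε x0) := by
  rw [Metric.continuous_iff]
  intro b θ hθ
  obtain ⟨ρ, hρ, H⟩ := unif hφ T (half_pos hθ)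
  refine ⟨ρ, hρ, fun a hab => ?_⟩
  have h1 : vfun φ T ε x0 a ≤ vfun φ T ε x0 b + θ / 2 :=
    vfun_dist_le hT fun r hr => (H a b hab r hr).le
  have h2 : vfun φ T ε x0 b ≤ vfun φ T ε x0 a + θ / 2 :=
    vfun_dist_le hT fun r hr => (H b a (by rwa [dist_comm]) r hr).le
  rw [Real.dist_eq, abs_lt]
  constructor <;> linarith

lemma vfun_flow_step (hφ : IsFlow φ) {T ε t : ℝ} (ht : t ∈ Icc (0:ℝ) T) (x0 z : X) :
    vfun φ T ε x0 (φ t z) ≤ vfun φ T ε x0 z := by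
  have hT : 0 ≤ T := le_trans ht.1 ht.2
  refine vfun_le hT fun r hr => ?_
  have he : φ r (φ t z) = φ (r + t) z := (hφ.2.2 r t z).symm
  rw [he]
  by_cases hc : r + t ≤ T
  · exact mem_le_vfun ⟨add_nonneg hr.1 ht.1, hc⟩
  · push_neg at hc
    have he2 : φ (r + t) z = φ T (φ (r + t - T) z) := by
      rw [← hφ.2.2 T (r + t - T) z]
      ring_nf
    rw [he2]
    refine le_trans (ufun_flow le_rfl x0 _) ?_
    exact mem_le_vfun ⟨by linarith, by linarith [hr.2, ht.2]⟩

lemma vfun_flow (hφ : IsFlow φ) {T ε : ℝ} (hT : 0 < T) {t : ℝ} (ht : 0 ≤ t) (x0 z : X) :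
    vfun φ T ε x0 (φ t z) ≤ vfun φ T ε x0 z := by
  have key : ∀ n : ℕ, ∀ s : ℝ, 0 ≤ s → s ≤ n * T → ∀ z : X,
      vfun φ T ε x0 (φ s z) ≤ vfun φ T ε x0 z := by
    intro n
    induction n with
    | zero =>
      intro s hs hsn z
      have : s = 0 := le_antisymm (by simpa using hsn) hs
      subst this
      rw [hφ.2.1 z]
    | succ n ih =>
      intro s hs hsn z
      by_cases hc : s ≤ T
      · exact vfun_flow_step hφ ⟨hs, hc⟩ x0 z
      · push_neg at hc
        have he : φ s z = φ T (φ (s - T) z) := by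
          rw [← hφ.2.2 T (s - T) z]; ring_nf
        rw [he]
        calc vfun φ T ε x0 (φ T (φ (s - T) z)) ≤ vfun φ T ε x0 (φ (s - T) z) :=
              vfun_flow_step hφ ⟨hT.le, le_rfl⟩ x0 _
          _ ≤ vfun φ T ε x0 z := by
              refine ih (s - T) (by linarith) ?_ z
              push_cast at hsn ⊢
              linarith
  obtain ⟨n, hn⟩ : ∃ n : ℕ, t ≤ n * T := by
    obtain ⟨n, hn⟩ := exists_nat_ge (t / T)
    exact ⟨n, by rwa [div_le_iff₀ hT] at hn⟩
  exact key n t ht hn z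

end SCRaux

namespace SCRaux
variable {X : Type*} [MetricSpace X] {φ : ℝ → X → X}

noncomputable def qseq : ℕ → ℝ := fun j => (j.unpair.1 : ℝ) / ((j.unpair.2 : ℝ) + 1)

lemma qseq_nonneg (j : ℕ) : 0 ≤ qseq j := by
  unfold qseq
  positivity

lemma qseq_surj (q : ℚ) (hq : 0 ≤ q) : ∃ j, qseq j = (q : ℝ) := by
  refine ⟨Nat.pair q.num.toNat (q.den - 1), ?_⟩
  unfold qseq
  rw [Nat.unpair_pair]
  have hnum : ((q.num.toNat : ℕ) : ℝ) = (q.num : ℝ) := by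
    have h := Int.toNat_of_nonneg (Rat.num_nonneg.mpr hq)
    exact_mod_cast congrArg (fun z : ℤ => (z : ℝ)) h
  have hden : ((q.den - 1 : ℕ) : ℝ) + 1 = (q.den : ℝ) := by
    have := q.pos
    have h1 : 1 ≤ q.den := this
    push_cast [Nat.cast_sub h1]
    ring
  rw [hnum, hden, Rat.cast_def]

noncomputable def Hfun (φ : ℝ → X → X) (T ε : ℝ) (x0 z : X) : ℝ :=
  ∑' j : ℕ, (1/2 : ℝ)^j * vfun φ T ε x0 (φ (qseq j) z)

lemma Hterm_nonneg (hφ : IsFlow φ) {T ε : ℝ} (hT : 0 ≤ T) (hε : 0 ≤ ε) (x0 z : X) (j : ℕ) :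
    0 ≤ (1/2 : ℝ)^j * vfun φ T ε x0 (φ (qseq j) z) :=
  mul_nonneg (by positivity) (vfun_nonneg hφ hT hε x0 _)

lemma Hterm_le (hT : 0 ≤ T) (hε1 : ε ≤ 1) (x0 z : X) (j : ℕ) :
    (1/2 : ℝ)^j * vfun φ T ε x0 (φ (qseq j) z) ≤ (1/2 : ℝ)^j := by
  have h := le_trans (vfun_le_eps (φ := φ) hT x0 (φ (qseq j) z)) hε1
  calc (1/2 : ℝ)^j * vfun φ T ε x0 (φ (qseq j) z) ≤ (1/2 : ℝ)^j * 1 :=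
        mul_le_mul_of_nonneg_left h (by positivity)
    _ = (1/2 : ℝ)^j := mul_one _

lemma Hterm_summable (hφ : IsFlow φ) {T ε : ℝ} (hT : 0 ≤ T) (hε : 0 ≤ ε) (hε1 : ε ≤ 1)
    (x0 z : X) : Summable (fun j : ℕ => (1/2 : ℝ)^j * vfun φ T ε x0 (φ (qseq j) z)) :=
  Summable.of_nonneg_of_le (Hterm_nonneg hφ hT hε x0 z) (Hterm_le hT hε1 x0 z)
    summable_geometric_two

lemma Hfun_cont [CompactSpace X] (hφ : IsFlow φ) {T ε : ℝ} (hT : 0 ≤ T) (hε : 0 ≤ ε)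
    (hε1 : ε ≤ 1) (x0 : X) : Continuous (Hfun φ T ε x0) := by
  refine continuous_tsum (u := fun j : ℕ => (1/2 : ℝ)^j) ?_ summable_geometric_two ?_
  · intro j
    exact continuous_const.mul ((vfun_cont hφ hT (ε := ε) x0).comp (cont_phi hφ (qseq j)))
  · intro j z
    rw [Real.norm_eq_abs, abs_of_nonneg (Hterm_nonneg hφ hT hε x0 z j)]
    exact Hterm_le hT hε1 x0 z j

lemma Hfun_le_two (hφ : IsFlow φ) {T ε : ℝ} (hT : 0 ≤ T) (hε : 0 ≤ ε) (hε1 : ε ≤ 1)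
    (x0 z : X) : Hfun φ T ε x0 z ≤ 2 := by
  have h := Summable.tsum_le_tsum (Hterm_le (φ := φ) hT hε1 x0 z)
    (Hterm_summable hφ hT hε hε1 x0 z) summable_geometric_two
  rwa [tsum_geometric_two] at h

lemma Hfun_nonneg (hφ : IsFlow φ) {T ε : ℝ} (hT : 0 ≤ T) (hε : 0 ≤ ε) (x0 z : X) :
    0 ≤ Hfun φ T ε x0 z :=
  tsum_nonneg (Hterm_nonneg hφ hT hε x0 z)

lemma Hfun_flow (hφ : IsFlow φ) {T ε : ℝ} (hT : 0 < T) (hε : 0 ≤ ε) (hε1 : ε ≤ 1)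
    {t : ℝ} (ht : 0 ≤ t) (x0 z : X) : Hfun φ T ε x0 (φ t z) ≤ Hfun φ T ε x0 z := by
  refine Summable.tsum_le_tsum ?_ (Hterm_summable hφ hT.le hε hε1 x0 _)
    (Hterm_summable hφ hT.le hε hε1 x0 z)
  intro j
  refine mul_le_mul_of_nonneg_left ?_ (by positivity)
  have he : φ (qseq j) (φ t z) = φ t (φ (qseq j) z) := by
    rw [← hφ.2.2 (qseq j) t z, ← hφ.2.2 t (qseq j) z, add_comm]
  rw [he]
  exact vfun_flow hφ hT ht x0 _

lemma Hfun_strict (hφ : IsFlow φ) {T ε : ℝ} (hT : 0 < T) (hε : 0 < ε) (hε1 : ε ≤ 1)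
    {y : X} {x0 : X} (hne : vfun φ T ε x0 (φ (2*T) y) < vfun φ T ε x0 y)
    {t : ℝ} (ht : 0 < t) : Hfun φ T ε x0 (φ t y) < Hfun φ T ε x0 y := by
  set g : ℝ → ℝ := fun s => vfun φ T ε x0 (φ s y) with hg
  have gmono : ∀ s s' : ℝ, 0 ≤ s → s ≤ s' → g s' ≤ g s := by
    intro s s' hs hss
    have he : φ s' y = φ (s' - s) (φ s y) := by
      rw [← hφ.2.2 (s' - s) s y]; ring_nf
    show vfun φ T ε x0 (φ s' y) ≤ vfun φ T ε x0 (φ s y)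
    rw [he]
    exact vfun_flow hφ hT (by linarith) x0 _
  -- key: some strict drop along rational times
  have hdrop : ∃ j0 : ℕ, g (qseq j0 + t) < g (qseq j0) := by
    by_contra hall
    push_neg at hall
    have geq : ∀ j : ℕ, g (qseq j + t) = g (qseq j) := fun j =>
      le_antisymm (gmono _ _ (qseq_nonneg j) (le_add_of_nonneg_right ht.le)) (hall j)
    have gq : ∀ q : ℚ, 0 ≤ q → g ((q : ℝ) + t) = g (q : ℝ) := by
      intro q hq
      obtain ⟨j, hj⟩ := qseq_surj q hq
      rw [← hj]; exact geq j
    have claim : ∀ n : ℕ, ∀ s : ℝ, 0 ≤ s → s ≤ n * (t/2) → g s = g 0 := by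
      intro n
      induction n with
      | zero =>
        intro s hs hsn
        have : s = 0 := le_antisymm (by simpa using hsn) hs
        rw [this]
      | succ n ih =>
        intro s hs hsn
        by_cases hc : s ≤ n * (t/2)
        · exact ih s hs hc
        · push_neg at hc
          by_cases hst : s ≤ t
          · -- sandwich with q = 0
            have h0t := gq 0 le_rfl
            rw [Rat.cast_zero, zero_add] at h0t
            have h1 : g s ≤ g 0 := gmono 0 s le_rfl hs
            have h2 : g t ≤ g s := gmono s t hs hst
            linarith
          · push_neg at hst
            -- n ≥ 2 here
            have hsn' : s ≤ ((n : ℝ) + 1) * (t/2) := by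
              push_cast at hsn
              linarith
            have hexp : ((n : ℝ) + 1) * (t/2) = (n : ℝ) * (t/2) + t/2 := by ring
            have hlt : s - t < (n : ℝ) * (t/2) := by linarith
            obtain ⟨q, hq1, hq2⟩ := exists_rat_btwn hlt
            have hq0 : (0 : ℝ) ≤ q := by linarith
            have hqs : (q : ℝ) ≤ s := by
              have : (n : ℝ) * (t/2) < s := hc
              linarith
            have hsq : s ≤ (q : ℝ) + t := by linarith
            have heq := gq q (by exact_mod_cast hq0)
            have h1 : g s ≤ g (q : ℝ) := gmono q s hq0 hqs
            have h2 : g ((q:ℝ) + t) ≤ g s := gmono s _ hs hsq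
            have hgs : g s = g (q : ℝ) := by linarith
            rw [hgs]
            exact ih q hq0 hq2.le
    obtain ⟨n, hn⟩ : ∃ n : ℕ, 2 * T ≤ n * (t/2) := by
      obtain ⟨n, hn⟩ := exists_nat_ge ((2*T) / (t/2))
      exact ⟨n, by rwa [div_le_iff₀ (by linarith)] at hn⟩
    have h2T := claim n (2*T) (by linarith) hn
    have hg0 : g 0 = vfun φ T ε x0 y := by
      show vfun φ T ε x0 (φ 0 y) = _
      rw [hφ.2.1 y]
    rw [hg0] at h2T
    have : g (2*T) < g (2*T) := by
      calc g (2*T) = vfun φ T ε x0 (φ (2*T) y) := rfl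
        _ < vfun φ T ε x0 y := hne
        _ = g (2*T) := h2T.symm
    exact lt_irrefl _ this
  obtain ⟨j0, hj0⟩ := hdrop
  have hterm : ∀ j, φ (qseq j) (φ t y) = φ (qseq j + t) y := fun j => (hφ.2.2 (qseq j) t y).symm
  have hsumlt : ∑' j : ℕ, (1/2 : ℝ)^j * g (qseq j + t) < ∑' j : ℕ, (1/2 : ℝ)^j * g (qseq j) := by
    refine Summable.tsum_lt_tsum (i := j0) ?_ ?_ ?_ ?_
    · intro j
      exact mul_le_mul_of_nonneg_left
        (gmono _ _ (qseq_nonneg j) (le_add_of_nonneg_right ht.le)) (by positivity)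
    · exact mul_lt_mul_of_pos_left hj0 (by positivity)
    · have hsu := Hterm_summable hφ hT.le hε.le hε1 x0 (φ t y)
      refine hsu.congr fun j => ?_
      show (1/2 : ℝ)^j * vfun φ T ε x0 (φ (qseq j) (φ t y)) = _
      rw [hterm j]
    · exact Hterm_summable hφ hT.le hε.le hε1 x0 y
  calc Hfun φ T ε x0 (φ t y) = ∑' j : ℕ, (1/2 : ℝ)^j * g (qseq j + t) := by
        unfold Hfun
        congr 1
        funext j
        rw [hterm j]
    _ < ∑' j : ℕ, (1/2 : ℝ)^j * g (qseq j) := hsumlt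
    _ = Hfun φ T ε x0 y := rfl

end SCRaux

namespace SCRaux
variable {X : Type*} [MetricSpace X] {φ : ℝ → X → X}

noncomputable def Tof (i : ℕ) : ℝ := ((Nat.unpair i).2 : ℝ) + 1
noncomputable def εof (i : ℕ) : ℝ := 1 / (((Nat.unpair i).2 : ℝ) + 1)

lemma Tof_pos (i : ℕ) : 0 < Tof i := by unfold Tof; positivity
lemma εof_pos (i : ℕ) : 0 < εof i := by unfold εof; positivity
lemma εof_le_one (i : ℕ) : εof i ≤ 1 := by
  unfold εof
  rw [div_le_one (by positivity)]
  have : (0:ℝ) ≤ ((Nat.unpair i).2 : ℝ) := Nat.cast_nonneg _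
  linarith

noncomputable def Gfun (φ : ℝ → X → X) (D : ℕ → X) (i : ℕ) (z : X) : ℝ :=
  Hfun φ (Tof i) (εof i) (D (Nat.unpair i).1) z

lemma Gfun_pair (D : ℕ → X) (m k : ℕ) (z : X) :
    Gfun φ D (Nat.pair m k) z
      = Hfun φ ((k : ℝ) + 1) (1 / ((k : ℝ) + 1)) (D m) z := by
  unfold Gfun Tof εof
  rw [Nat.unpair_pair]

lemma Gfun_nonneg (hφ : IsFlow φ) (D : ℕ → X) (i : ℕ) (z : X) : 0 ≤ Gfun φ D i z :=
  Hfun_nonneg hφ (Tof_pos i).le (εof_pos i).le _ z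

lemma Gfun_le_two (hφ : IsFlow φ) (D : ℕ → X) (i : ℕ) (z : X) : Gfun φ D i z ≤ 2 :=
  Hfun_le_two hφ (Tof_pos i).le (εof_pos i).le (εof_le_one i) _ z

lemma Gfun_summable (hφ : IsFlow φ) (D : ℕ → X) (z : X) :
    Summable (fun i : ℕ => (1/2 : ℝ)^i * Gfun φ D i z) := by
  refine Summable.of_nonneg_of_le
    (fun i => mul_nonneg (by positivity) (Gfun_nonneg hφ D i z))
    (fun i => ?_) (summable_geometric_two.mul_right 2)
  exact mul_le_mul_of_nonneg_left (Gfun_le_two hφ D i z) (by positivity)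

noncomputable def hfin (φ : ℝ → X → X) (D : ℕ → X) (z : X) : ℝ :=
  ∑' i : ℕ, (1/2 : ℝ)^i * Gfun φ D i z

lemma hfin_cont [CompactSpace X] (hφ : IsFlow φ) (D : ℕ → X) : Continuous (hfin φ D) := by
  refine continuous_tsum (u := fun i : ℕ => (1/2 : ℝ)^i * 2) ?_
    (summable_geometric_two.mul_right 2) ?_
  · intro i
    exact continuous_const.mul
      (Hfun_cont hφ (Tof_pos i).le (εof_pos i).le (εof_le_one i) _)
  · intro i z
    rw [Real.norm_eq_abs, abs_of_nonneg (mul_nonneg (by positivity) (Gfun_nonneg hφ D i z))]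
    exact mul_le_mul_of_nonneg_left (Gfun_le_two hφ D i z) (by positivity)

lemma hfin_flow [CompactSpace X] (hφ : IsFlow φ) (D : ℕ → X) {t : ℝ} (ht : 0 ≤ t) (z : X) :
    hfin φ D (φ t z) ≤ hfin φ D z := by
  refine Summable.tsum_le_tsum (fun i => ?_) (Gfun_summable hφ D _) (Gfun_summable hφ D z)
  exact mul_le_mul_of_nonneg_left
    (Hfun_flow hφ (Tof_pos i) (εof_pos i).le (εof_le_one i) ht _ z) (by positivity)

theorem hfin_strict [CompactSpace X] (hφ : IsFlow φ) (D : ℕ → X) (hD : DenseRange D)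
    {x : X} {ε₀ T₀ : ℝ} (hε₀ : 0 < ε₀) (hT₀ : 0 < T₀) (hnc : ¬ StrongChain φ ε₀ T₀ x x)
    {t : ℝ} (ht : 0 < t) : hfin φ D (φ t x) < hfin φ D x := by
  obtain ⟨k, hk⟩ := exists_nat_ge (max T₀ (1/ε₀))
  set T : ℝ := (k : ℝ) + 1 with hTdef
  set ε : ℝ := 1 / ((k : ℝ) + 1) with hεdef
  have hTk : 0 < T := by positivity
  have hT₀T : T₀ ≤ T := le_trans (le_trans (le_max_left _ _) hk) (by rw [hTdef]; linarith)
  have hεpos : 0 < ε := by positivity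
  have hε1 : ε ≤ 1 := by
    rw [hεdef, div_le_one (by positivity)]
    have : (0:ℝ) ≤ (k:ℝ) := Nat.cast_nonneg _
    linarith
  have hεε₀ : ε ≤ ε₀ := by
    have h1 : 1/ε₀ ≤ (k:ℝ) + 1 := le_trans (le_trans (le_max_right _ _) hk) (by linarith)
    rw [div_le_iff₀ hε₀] at h1
    rw [hεdef, div_le_iff₀ (by positivity : (0:ℝ) < (k:ℝ)+1)]
    nlinarith
  have hnc' : ¬ StrongChain φ ε T x x := fun hc => hnc (strongChain_mono hc hεε₀ hT₀T)
  have hcost : ε ≤ cost φ T x x := le_cost_of_not_strongChain hnc'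
  obtain ⟨ρ, hρ, Hu⟩ := unif hφ (2*T) (show (0:ℝ) < ε/4 by positivity)
  obtain ⟨m, hm⟩ := hD.exists_dist_lt (φ T x)
    (show (0:ℝ) < min ρ (ε/4) from lt_min hρ (by positivity))
  set x0 : X := D m with hx0
  have hdρ : dist x0 (φ T x) < ρ := by
    rw [dist_comm]; exact lt_of_lt_of_le hm (min_le_left _ _)
  have hdε : dist (φ T x) x0 < ε/4 := lt_of_lt_of_le hm (min_le_right _ _)
  have hA : cost φ T x x0 ≤ ε/4 := by
    have h1 := cost_le_add_dist (φ := φ) T x (φ T x) x0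
    rw [cost_flow_self le_rfl x, zero_add] at h1
    exact le_trans h1 hdε.le
  have hB : 3*(ε/4) ≤ cost φ T x0 x := by
    have h2 := cost_triangle (φ := φ) T x x0 x
    linarith
  have hu_x : 3*(ε/4) ≤ ufun φ T ε x0 x := le_min hB (by linarith)
  have hv_x : 3*(ε/4) ≤ vfun φ T ε x0 x := le_trans hu_x (ufun_le_vfun hφ hTk.le x0 x)
  have hvupper : vfun φ T ε x0 (φ (2*T) x) ≤ ε/4 := by
    refine vfun_le hTk.le fun r hr => ?_
    have he1 : φ r (φ (2*T) x) = φ (r + 2*T) x := (hφ.2.2 r (2*T) x).symm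
    have he2 : φ (r + 2*T) x = φ (r + T) (φ T x) := by
      rw [← hφ.2.2 (r+T) T x]; ring_nf
    have hmem : r + T ∈ Icc (0:ℝ) (2*T) := ⟨by linarith [hr.1, hTk], by linarith [hr.2]⟩
    have hd := Hu x0 (φ T x) hdρ (r+T) hmem
    calc ufun φ T ε x0 (φ r (φ (2*T) x)) ≤ cost φ T x0 (φ r (φ (2*T) x)) := min_le_left _ _
      _ ≤ dist (φ (r+T) x0) (φ r (φ (2*T) x)) := cost_le_dist (by linarith [hr.1]) x0 _
      _ = dist (φ (r+T) x0) (φ (r+T) (φ T x)) := by rw [he1, he2]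
      _ ≤ ε/4 := hd.le
  have hne : vfun φ T ε x0 (φ (2*T) x) < vfun φ T ε x0 x := by
    calc vfun φ T ε x0 (φ (2*T) x) ≤ ε/4 := hvupper
      _ < 3*(ε/4) := by linarith
      _ ≤ vfun φ T ε x0 x := hv_x
  have Hstrict : Hfun φ T ε x0 (φ t x) < Hfun φ T ε x0 x :=
    Hfun_strict hφ hTk hεpos hε1 hne ht
  unfold hfin
  refine Summable.tsum_lt_tsum (i := Nat.pair m k) (fun i => ?_) ?_
    (Gfun_summable hφ D _) (Gfun_summable hφ D x)
  · exact mul_le_mul_of_nonneg_left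
      (Hfun_flow hφ (Tof_pos i) (εof_pos i).le (εof_le_one i) ht.le _ x) (by positivity)
  · have e1 := Gfun_pair (φ := φ) D m k (φ t x)
    have e2 := Gfun_pair (φ := φ) D m k x
    rw [e1, e2]
    exact mul_lt_mul_of_pos_left Hstrict (by positivity)

end SCRaux


theorem stmt16 {X : Type*} [MetricSpace X] [CompactSpace X] (φ : ℝ → X → X)
    (hφ : IsFlow φ) :
    ∃ h : X → ℝ, Continuous h ∧ (∀ t, 0 ≤ t → ∀ x, h (φ t x) ≤ h x) ∧
      ∀ x ∉ SCR φ, ∀ t, 0 < t → h (φ t x) < h x := by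
  rcases isEmpty_or_nonempty X with hE | hNE
  · exact ⟨fun _ => 0, continuous_const, fun t ht x => le_rfl,
      fun x hx t ht' => (hE.false x).elim⟩
  · refine ⟨SCRaux.hfin φ (TopologicalSpace.denseSeq X), SCRaux.hfin_cont hφ _,
      fun t ht z => SCRaux.hfin_flow hφ _ ht z, ?_⟩
    intro x hx t ht
    have hx' : ¬ ∀ ε > 0, ∀ T > 0, StrongChain φ ε T x x := hx
    push_neg at hx'
    obtain ⟨ε₀, hε₀, T₀, hT₀, hnc⟩ := hx'
    exact SCRaux.hfin_strict hφ _ (TopologicalSpace.denseRange_denseSeq X) hε₀ hT₀ hnc ht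
end
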